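/- Let L ⊆ V_ℂ ⊕ V*_ℂ be a complex maximally isotropic subspace (for the complexified natural pairing) with L ∩ L̄ = 0, where the bar is complex conjugation. Then dim_ℝ V is even. -/
import Mathlib


open scoped BigOperators

/-- The complex-bilinear extension of the natural pairing on `V_ℂ ⊕ V*_ℂ`,
with `V_ℂ = ℂⁿ` (the complexification of the `n`-dimensional real space `V`)
and the dual identified with `ℂⁿ` via coordinates:
`G((x,a),(y,b)) = ½(Σ b_i x_i + Σ a_i y_i)`. -/
noncomputable def cPairing (n : ℕ) (p q : (Fin n → ℂ) × (Fin n → ℂ)) : ℂ :=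
  (1 / 2) * (∑ i, q.2 i * p.1 i + ∑ i, p.2 i * q.1 i)

/-- The complex conjugation induced by the real structure. -/
def cConj (n : ℕ) (p : (Fin n → ℂ) × (Fin n → ℂ)) :
    (Fin n → ℂ) × (Fin n → ℂ) :=
  (fun i => starRingEnd ℂ (p.1 i), fun i => starRingEnd ℂ (p.2 i))

namespace Stmt16Aux

variable {n : ℕ}

abbrev W (n : ℕ) := (Fin n → ℂ) × (Fin n → ℂ)

/-- The Hermitian form `H p q = 2 G(p, conj q)`: linear in `p`, conjugate-linear in `q`. -/
noncomputable def H (p q : W n) : ℂ :=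
  ∑ i, (starRingEnd ℂ) (q.2 i) * p.1 i + ∑ i, p.2 i * (starRingEnd ℂ) (q.1 i)

/-- The associated real quadratic form. -/
noncomputable def Q (p : W n) : ℝ := (H p p).re

lemma H_herm (p q : W n) : H q p = (starRingEnd ℂ) (H p q) := by
  simp only [H, map_add, map_sum, map_mul, RingHomCompTriple.comp_apply, Complex.conj_conj]
  rw [add_comm]
  congr 1 <;> exact Finset.sum_congr rfl fun i _ => by ring
lemma H_add_left (p q r : W n) : H (p + q) r = H p r + H q r := by
  simp [H, Prod.fst_add, Prod.snd_add, mul_add, add_mul, Finset.sum_add_distrib]; ring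
lemma H_add_right (p q r : W n) : H p (q + r) = H p q + H p r := by
  simp [H, Prod.fst_add, Prod.snd_add, mul_add, add_mul, Finset.sum_add_distrib]; ring
lemma H_smul_left (c : ℂ) (p q : W n) : H (c • p) q = c * H p q := by
  simp [H, Finset.mul_sum, mul_add]
  congr 1 <;> exact Finset.sum_congr rfl fun i _ => by ring
lemma H_smul_right (c : ℂ) (p q : W n) : H p (c • q) = (starRingEnd ℂ) c * H p q := by
  simp [H, Finset.mul_sum, mul_add]
  congr 1 <;> exact Finset.sum_congr rfl fun i _ => by ring
lemma H_zero_left (q : W n) : H 0 q = 0 := by simp [H]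
lemma Q_zero : Q (0 : W n) = 0 := by simp [Q, H]
lemma H_self_real (p : W n) : (H p p).im = 0 := by
  have h2 := congrArg Complex.im (H_herm p p)
  simp [Complex.conj_im] at h2; linarith

/-- `w ↦ H w v` as a `ℂ`-linear functional. -/
noncomputable def phi (v : W n) : W n →ₗ[ℂ] ℂ where
  toFun w := H w v
  map_add' p q := H_add_left p q v
  map_smul' c p := H_smul_left c p v

lemma phi_apply (v w : W n) : phi v w = H w v := rfl

lemma polar {M : Submodule ℂ (W n)} (h : ∀ v ∈ M, H v v = 0)
    {p q : W n} (hp : p ∈ M) (hq : q ∈ M) : H p q = 0 := by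
  have h1 : H p q + H q p = 0 := by
    have := h (p + q) (M.add_mem hp hq)
    rw [H_add_left, H_add_right, H_add_right, h p hp, h q hq] at this
    linear_combination this
  have h2 : H p q = H q p := by
    have := h (p + Complex.I • q) (M.add_mem hp (M.smul_mem _ hq))
    rw [H_add_left, H_add_right, H_add_right, H_smul_left, H_smul_left, H_smul_right,
      H_smul_right, h p hp, h q hq, Complex.conj_I] at this
    have eq2 : Complex.I * Complex.I = -1 := Complex.I_mul_I
    linear_combination Complex.I * this + (H p q - H q p) * eq2
  linear_combination (h1 + (by linear_combination h2 : H p q - H q p = 0))/2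

lemma Q_nonneg_of_pos {R : Submodule ℂ (W n)} (h : ∀ p ∈ R, p ≠ 0 → 0 < Q p) :
    ∀ p ∈ R, 0 ≤ Q p := by
  intro p hp
  by_cases h0 : p = 0
  · simp [h0, Q_zero]
  · exact (h p hp h0).le

lemma Q_nonpos_of_neg {R : Submodule ℂ (W n)} (h : ∀ p ∈ R, p ≠ 0 → Q p < 0) :
    ∀ p ∈ R, Q p ≤ 0 := by
  intro p hp
  by_cases h0 : p = 0
  · simp [h0, Q_zero]
  · exact (h p hp h0).le

set_option maxHeartbeats 1000000 in
lemma diag : ∀ (k : ℕ) (M : Submodule ℂ (W n)), Module.finrank ℂ M = k →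
    (∀ p ∈ M, (∀ q ∈ M, H p q = 0) → p = 0) →
    ∃ R S : Submodule ℂ (W n), R ≤ M ∧ S ≤ M ∧
      Module.finrank ℂ R + Module.finrank ℂ S = k ∧
      (∀ p ∈ R, p ≠ 0 → 0 < Q p) ∧ (∀ p ∈ S, p ≠ 0 → Q p < 0) := by
  intro k
  induction k using Nat.strong_induction_on with
  | _ k ih =>
  intro M hk hnd
  by_cases hex : ∃ v ∈ M, H v v ≠ 0
  · obtain ⟨v, hvM, hvv⟩ := hex
    have hv0 : v ≠ 0 := by rintro rfl; exact hvv (H_zero_left 0)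
    set M' : Submodule ℂ (W n) := M ⊓ LinearMap.ker (phi v) with hM'def
    have hM'le : M' ≤ M := inf_le_left
    have hM'v : ∀ w ∈ M', H w v = 0 := fun w hw => hw.2
    -- rank of M'
    set ψ : M →ₗ[ℂ] ℂ := (phi v).comp M.subtype with hψdef
    have hrange : LinearMap.range ψ = ⊤ := by
      rw [eq_top_iff]
      rintro c -
      have hm : H v v ∈ LinearMap.range ψ := ⟨⟨v, hvM⟩, rfl⟩
      have h2 := Submodule.smul_mem _ (c / H v v) hm
      rwa [smul_eq_mul, div_mul_cancel₀ c hvv] at h2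
    have hker : LinearMap.ker ψ = Submodule.comap M.subtype M' := by
      rw [hψdef, LinearMap.ker_comp, hM'def, Submodule.comap_inf,
        Submodule.comap_subtype_self, top_inf_eq]
    have hkerrank : Module.finrank ℂ (LinearMap.ker ψ) = Module.finrank ℂ M' := by
      rw [hker]
      exact LinearEquiv.finrank_eq (Submodule.comapSubtypeEquivOfLe hM'le)
    have hrk : Module.finrank ℂ M' + 1 = k := by
      have h1 := LinearMap.finrank_range_add_finrank_ker ψ
      rw [hrange, finrank_top, hkerrank, hk] at h1
      have : Module.finrank ℂ ℂ = 1 := Module.finrank_self ℂ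
      omega
    -- nondegeneracy on M'
    have hnd' : ∀ p ∈ M', (∀ q ∈ M', H p q = 0) → p = 0 := by
      intro p hp hq0
      apply hnd p (hM'le hp)
      intro q hqM
      set c : ℂ := H q v / H v v with hc
      have hq' : q - c • v ∈ M' := by
        refine ⟨M.sub_mem hqM (M.smul_mem _ hvM), ?_⟩
        have : phi v (q - c • v) = 0 := by
          rw [map_sub, map_smul, phi_apply, phi_apply, smul_eq_mul, hc,
            div_mul_cancel₀ _ hvv, sub_self]
        exact this
      have hpv : H p v = 0 := hM'v p hp
      have : q = (q - c • v) + c • v := by abel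
      rw [this, H_add_right, hq0 _ hq', H_smul_right, hpv, mul_zero, add_zero]
    obtain ⟨R', S', hR'le, hS'le, hsum, hRpos, hSneg⟩ :=
      ih (Module.finrank ℂ M') (by omega) M' rfl hnd'
    have hre0 : (H v v).re ≠ 0 := by
      intro h
      exact hvv (Complex.ext h (H_self_real v))
    have hdisj : ∀ T : Submodule ℂ (W n), T ≤ M' → T ⊓ (ℂ ∙ v) = ⊥ := by
      intro T hT
      rw [eq_bot_iff]
      rintro x ⟨hx1, hx2⟩
      obtain ⟨c, rfl⟩ := Submodule.mem_span_singleton.1 hx2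
      have h0 : H (c • v) v = 0 := hM'v _ (hT hx1)
      rw [H_smul_left] at h0
      rcases mul_eq_zero.1 h0 with h | h
      · simp [h]
      · exact absurd h hvv
    have hranksup : ∀ T : Submodule ℂ (W n), T ≤ M' →
        Module.finrank ℂ ↥(T ⊔ (ℂ ∙ v)) = Module.finrank ℂ T + 1 := by
      intro T hT
      have := Submodule.finrank_sup_add_finrank_inf_eq T (ℂ ∙ v)
      rw [hdisj T hT, finrank_bot, add_zero, finrank_span_singleton hv0] at this
      exact this
    have hQdecomp : ∀ (T : Submodule ℂ (W n)), T ≤ M' → ∀ a ∈ T, ∀ c : ℂ,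
        Q (a + c • v) = Q a + Complex.normSq c * (H v v).re := by
      intro T hT a ha c
      have hav : H a v = 0 := hM'v a (hT ha)
      have hva : H v a = 0 := by rw [H_herm, hav, map_zero]
      have hexp : H (a + c • v) (a + c • v)
          = H a a + (Complex.normSq c : ℝ) * H v v := by
        simp only [H_add_left, H_add_right, H_smul_left, H_smul_right, hav, hva]
        linear_combination (H v v) * Complex.mul_conj c
      unfold Q
      rw [hexp, Complex.add_re, Complex.re_ofReal_mul]
    rcases lt_or_gt_of_ne hre0 with hneg | hpos
    · -- H v v negative: add v to S'
      refine ⟨R', S' ⊔ (ℂ ∙ v), le_trans hR'le hM'le,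
        sup_le (le_trans hS'le hM'le) ((Submodule.span_singleton_le_iff_mem _ _).2 hvM),
        ?_, hRpos, ?_⟩
      · rw [hranksup S' hS'le]; omega
      · intro p hp hp0
        obtain ⟨a, ha, b, hb, rfl⟩ := Submodule.mem_sup.1 hp
        obtain ⟨c, rfl⟩ := Submodule.mem_span_singleton.1 hb
        rw [hQdecomp S' hS'le a ha c]
        have hQa : Q a ≤ 0 := Q_nonpos_of_neg hSneg a ha
        by_cases hc : c = 0
        · have ha0 : a ≠ 0 := by
            rintro rfl; exact hp0 (by simp [hc])
          have := hSneg a ha ha0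
          simp [hc]; linarith
        · have h1 : 0 < Complex.normSq c := Complex.normSq_pos.2 hc
          nlinarith
    · -- H v v positive: add v to R'
      refine ⟨R' ⊔ (ℂ ∙ v), S',
        sup_le (le_trans hR'le hM'le) ((Submodule.span_singleton_le_iff_mem _ _).2 hvM),
        le_trans hS'le hM'le, ?_, ?_, hSneg⟩
      · rw [hranksup R' hR'le]; omega
      · intro p hp hp0
        obtain ⟨a, ha, b, hb, rfl⟩ := Submodule.mem_sup.1 hp
        obtain ⟨c, rfl⟩ := Submodule.mem_span_singleton.1 hb
        rw [hQdecomp R' hR'le a ha c]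
        have hQa : 0 ≤ Q a := Q_nonneg_of_pos hRpos a ha
        by_cases hc : c = 0
        · have ha0 : a ≠ 0 := by
            rintro rfl; exact hp0 (by simp [hc])
          have := hRpos a ha ha0
          simp [hc]; linarith
        · have h1 : 0 < Complex.normSq c := Complex.normSq_pos.2 hc
          nlinarith
  · push_neg at hex
    have hbot : M = ⊥ := by
      rw [Submodule.eq_bot_iff]
      intro p hp
      exact hnd p hp (fun q hq => polar hex hp hq)
    refine ⟨⊥, ⊥, bot_le, bot_le, ?_, ?_, ?_⟩
    · rw [hbot, finrank_bot] at hk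
      simp [finrank_bot, ← hk]
    · intro p hp hp0
      rw [Submodule.mem_bot] at hp
      exact absurd hp hp0
    · intro p hp hp0
      rw [Submodule.mem_bot] at hp
      exact absurd hp hp0
-- basic cConj lemmas
lemma cConj_cConj (p : W n) : cConj n (cConj n p) = p := by
  refine Prod.ext ?_ ?_ <;> funext i <;> simp [cConj]

lemma cConj_add (p q : W n) : cConj n (p + q) = cConj n p + cConj n q := by
  refine Prod.ext ?_ ?_ <;> funext i <;> simp [cConj]

lemma cConj_smul (c : ℂ) (p : W n) :
    cConj n (c • p) = (starRingEnd ℂ) c • cConj n p := by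
  refine Prod.ext ?_ ?_ <;> funext i <;> simp [cConj]

lemma cConj_zero : cConj n (0 : W n) = 0 := by
  refine Prod.ext ?_ ?_ <;> funext i <;> simp [cConj]

lemma cConj_smul_real (r : ℝ) (p : W n) : cConj n (r • p) = r • cConj n p := by
  refine Prod.ext ?_ ?_ <;> funext i <;>
    simp [cConj, Complex.real_smul, map_mul, Complex.conj_ofReal]

lemma cConj_eq_zero {p : W n} (h : cConj n p = 0) : p = 0 := by
  rw [← cConj_cConj p, h, cConj_zero]

/-- conjugate of a subspace, as a `ℂ`-subspace. -/
noncomputable def conjSub (L : Submodule ℂ (W n)) : Submodule ℂ (W n) where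
  carrier := cConj n '' L
  add_mem' := by
    rintro a b ⟨x, hx, rfl⟩ ⟨y, hy, rfl⟩
    exact ⟨x + y, L.add_mem hx hy, cConj_add x y⟩
  zero_mem' := ⟨0, L.zero_mem, cConj_zero⟩
  smul_mem' := by
    rintro c a ⟨x, hx, rfl⟩
    refine ⟨(starRingEnd ℂ) c • x, L.smul_mem _ hx, ?_⟩
    rw [cConj_smul]; simp

lemma mem_conjSub {L : Submodule ℂ (W n)} {q : W n} :
    q ∈ conjSub L ↔ ∃ p ∈ L, cConj n p = q := Iff.rfl

lemma conjSub_le {L₁ L₂ : Submodule ℂ (W n)} (h : L₁ ≤ L₂) : conjSub L₁ ≤ conjSub L₂ := by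
  rintro q ⟨p, hp, rfl⟩
  exact ⟨p, h hp, rfl⟩

/-- conjugation as a real-linear equivalence. -/
noncomputable def sigmaR : W n ≃ₗ[ℝ] W n where
  toFun := cConj n
  invFun := cConj n
  left_inv := cConj_cConj
  right_inv := cConj_cConj
  map_add' := cConj_add
  map_smul' := cConj_smul_real

lemma finrank_conjSub (L : Submodule ℂ (W n)) :
    Module.finrank ℂ (conjSub L) = Module.finrank ℂ L := by
  have hmap : (conjSub L).restrictScalars ℝ
      = Submodule.map (sigmaR (n := n) : W n →ₗ[ℝ] W n) (L.restrictScalars ℝ) := by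
    ext x
    constructor
    · rintro ⟨p, hp, rfl⟩; exact ⟨p, hp, rfl⟩
    · rintro ⟨p, hp, rfl⟩; exact ⟨p, hp, rfl⟩
  have h1 : Module.finrank ℝ ((conjSub L).restrictScalars ℝ)
      = Module.finrank ℝ (L.restrictScalars ℝ) := by
    rw [hmap]
    exact LinearEquiv.finrank_map_eq (sigmaR (n := n)) (L.restrictScalars ℝ)
  have e1 := (Submodule.restrictScalarsEquiv (S := ℝ) (R := ℂ) (M := W n)
    (conjSub L)).restrictScalars ℝ
  have e2 := (Submodule.restrictScalarsEquiv (S := ℝ) (R := ℂ) (M := W n) L).restrictScalars ℝ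
  have h2 : Module.finrank ℝ (conjSub L) = Module.finrank ℝ L := by
    rw [← e1.finrank_eq, ← e2.finrank_eq]; exact h1
  have h3 : Module.finrank ℝ ℂ * Module.finrank ℂ (conjSub L)
      = Module.finrank ℝ ℂ * Module.finrank ℂ L := by
    rw [Module.finrank_mul_finrank, Module.finrank_mul_finrank]
    exact h2
  have h4 : Module.finrank ℝ ℂ = 2 := Complex.finrank_real_complex
  rw [h4] at h3
  omega

namespace Part2
variable {n : ℕ}
open Stmt16Aux

lemma H_conj (p q : W n) : H (cConj n p) (cConj n q) = (starRingEnd ℂ) (H p q) := by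
  simp only [H, cConj, map_add, map_sum, map_mul, Complex.conj_conj]

lemma H_cConj_right (p q : W n) : H p (cConj n q) = 2 * cPairing n p q := by
  simp only [H, cConj, cPairing, Complex.conj_conj]
  ring

lemma H_self_witness (p : W n) : H p (p.2, p.1)
    = ((∑ i, (Complex.normSq (p.1 i) + Complex.normSq (p.2 i)) : ℝ) : ℂ) := by
  simp only [H]
  push_cast
  rw [← Finset.sum_add_distrib]
  exact Finset.sum_congr rfl fun i _ => by
    rw [Complex.mul_conj, ← Complex.normSq_eq_conj_mul_self]

lemma Q_diag (s : ℂ) (x : Fin n → ℂ) :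
    Q ((x, s • x) : W n) = ∑ i, 2 * s.re * Complex.normSq (x i) := by
  unfold Q H
  rw [Complex.add_re, Complex.re_sum, Complex.re_sum, ← Finset.sum_add_distrib]
  refine Finset.sum_congr rfl fun i _ => ?_
  dsimp only
  rw [Pi.smul_apply, smul_eq_mul]
  have h1 : (starRingEnd ℂ) (s * x i) * x i = (starRingEnd ℂ) s * (Complex.normSq (x i) : ℂ) := by
    rw [map_mul, mul_assoc, ← Complex.normSq_eq_conj_mul_self]
  have h2 : (s * x i) * (starRingEnd ℂ) (x i) = s * (Complex.normSq (x i) : ℂ) := by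
    rw [mul_assoc, Complex.mul_conj]
  rw [h1, h2]
  simp [Complex.mul_re, Complex.conj_re, Complex.conj_im, Complex.ofReal_re, Complex.ofReal_im]
  ring

lemma exists_ne_zero_coord {x : Fin n → ℂ} (hx : x ≠ 0) : ∃ i, x i ≠ 0 := by
  by_contra h
  push_neg at h
  exact hx (funext fun i => h i)

lemma Q_diag_pos {x : Fin n → ℂ} (hx : x ≠ 0) : 0 < Q ((x, x) : W n) := by
  have h := Q_diag 1 x
  rw [one_smul] at h
  rw [h, ← Finset.mul_sum]
  obtain ⟨i, hi⟩ := exists_ne_zero_coord hx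
  have hpos : 0 < ∑ j, Complex.normSq (x j) :=
    Finset.sum_pos' (fun j _ => Complex.normSq_nonneg (x j))
      ⟨i, Finset.mem_univ i, Complex.normSq_pos.2 hi⟩
  simp only [Complex.one_re]
  nlinarith

lemma Q_antidiag_neg {x : Fin n → ℂ} (hx : x ≠ 0) : Q ((x, -x) : W n) < 0 := by
  have h := Q_diag (-1) x
  rw [neg_one_smul] at h
  rw [h, ← Finset.mul_sum]
  obtain ⟨i, hi⟩ := exists_ne_zero_coord hx
  have hpos : 0 < ∑ j, Complex.normSq (x j) :=
    Finset.sum_pos' (fun j _ => Complex.normSq_nonneg (x j))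
      ⟨i, Finset.mem_univ i, Complex.normSq_pos.2 hi⟩
  simp only [Complex.neg_re, Complex.one_re]
  nlinarith

/-- the diagonal subspace `{(x, s•x)}`. -/
noncomputable def Dg (s : ℂ) : Submodule ℂ (W n) :=
  LinearMap.range (LinearMap.prod LinearMap.id (s • LinearMap.id) :
    (Fin n → ℂ) →ₗ[ℂ] W n)

lemma mem_Dg {s : ℂ} {q : W n} : q ∈ Dg (n := n) s ↔ ∃ x : Fin n → ℂ, (x, s • x) = q := by
  constructor
  · rintro ⟨x, rfl⟩
    exact ⟨x, rfl⟩
  · rintro ⟨x, rfl⟩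
    exact ⟨x, rfl⟩

lemma finrank_Dg (s : ℂ) : Module.finrank ℂ (Dg (n := n) s) = n := by
  rw [Dg, LinearMap.finrank_range_of_inj, Module.finrank_pi, Fintype.card_fin]
  intro x y hxy
  have := congrArg Prod.fst hxy
  exact this

lemma finrank_W : Module.finrank ℂ (W n) = 2 * n := by
  rw [Module.finrank_prod, Module.finrank_pi, Fintype.card_fin]
  ring

lemma count {P N : Submodule ℂ (W n)} (hP : ∀ p ∈ P, p ≠ 0 → 0 < Q p)
    (hN : ∀ p ∈ N, Q p ≤ 0) :
    Module.finrank ℂ P + Module.finrank ℂ N ≤ 2 * n := by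
  have hdisj : P ⊓ N = ⊥ := by
    rw [eq_bot_iff]
    rintro x ⟨h1, h2⟩
    rw [Submodule.mem_bot]
    by_contra hx0
    exact absurd (hP x h1 hx0) (not_lt.2 (hN x h2))
  have hsum := Submodule.finrank_sup_add_finrank_inf_eq P N
  rw [hdisj, finrank_bot, add_zero] at hsum
  have hle := Submodule.finrank_le (P ⊔ N)
  rw [finrank_W] at hle
  omega

end Part2

end Stmt16Aux

section Final
open Stmt16Aux Part2

/-- If `L ⊆ V_ℂ ⊕ V*_ℂ` is a complex maximally isotropic subspace
(`dim_ℂ L = dim_ℝ V = n`) with `L ∩ L̄ = 0`, then `dim_ℝ V` is even. -/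
theorem stmt16 (n : ℕ) (L : Submodule ℂ ((Fin n → ℂ) × (Fin n → ℂ)))
    (hiso : ∀ p ∈ L, ∀ q ∈ L, cPairing n p q = 0)
    (hrank : Module.finrank ℂ L = n)
    (hconj : ∀ p ∈ L, cConj n p ∈ L → p = 0) :
    Even n := by
  classical
  set Lbar := conjSub L with hLbar
  have hinf : L ⊓ Lbar = ⊥ := by
    rw [eq_bot_iff]
    rintro x ⟨hxL, p, hpL, rfl⟩
    rw [Submodule.mem_bot]
    exact hconj _ hxL (by rw [cConj_cConj]; exact hpL)
  have hrankbar : Module.finrank ℂ Lbar = n := by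
    rw [hLbar, finrank_conjSub, hrank]
  have hsup : L ⊔ Lbar = ⊤ := by
    apply Submodule.eq_top_of_finrank_eq
    have h := Submodule.finrank_sup_add_finrank_inf_eq L Lbar
    rw [hinf, finrank_bot, add_zero, hrank, hrankbar] at h
    rw [h, finrank_W]
    ring
  have hH1 : ∀ p ∈ L, ∀ q ∈ L, H p (cConj n q) = 0 := fun p hp q hq => by
    rw [H_cConj_right, hiso p hp q hq, mul_zero]
  have hH2 : ∀ p ∈ L, ∀ q ∈ L, H (cConj n p) q = 0 := fun p hp q hq => by
    rw [H_herm, hH1 q hq p hp, map_zero]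
  have hnd : ∀ p ∈ L, (∀ q ∈ L, H p q = 0) → p = 0 := by
    intro p hp hq0
    have hall : ∀ w : W n, w ∈ L ⊔ Lbar → H p w = 0 := by
      rintro w hw
      obtain ⟨a, ha, b, hb, rfl⟩ := Submodule.mem_sup.1 hw
      obtain ⟨b', hb', rfl⟩ := hb
      rw [H_add_right, hq0 a ha, hH1 p hp b' hb', add_zero]
    have hw := hall (p.2, p.1) (by rw [hsup]; trivial)
    rw [H_self_witness] at hw
    have h0 : ∑ i, (Complex.normSq (p.1 i) + Complex.normSq (p.2 i)) = 0 := by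
      exact_mod_cast hw
    have hterm := (Finset.sum_eq_zero_iff_of_nonneg (fun i _ => add_nonneg (Complex.normSq_nonneg _) (Complex.normSq_nonneg _))).1 h0
    have h1 : ∀ i, p.1 i = 0 ∧ p.2 i = 0 := by
      intro i
      have h := hterm i (Finset.mem_univ i)
      have n1 := Complex.normSq_nonneg (p.1 i)
      have n2 := Complex.normSq_nonneg (p.2 i)
      constructor <;> [skip; skip] <;>
        first
        | exact Complex.normSq_eq_zero.1 (by linarith)
        | exact Complex.normSq_eq_zero.1 (by linarith)
    refine Prod.ext (funext fun i => ?_) (funext fun i => ?_)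
    · exact (h1 i).1
    · exact (h1 i).2
  obtain ⟨R, S, hRle, hSle, hsum, hRpos, hSneg⟩ := diag n L hrank hnd
  have hQconj : ∀ p : W n, Q (cConj n p) = Q p := fun p => by
    unfold Q
    rw [H_conj]
    exact Complex.conj_re _
  -- positivity on R ⊔ conjSub R
  have hPpos : ∀ p ∈ R ⊔ conjSub R, p ≠ 0 → 0 < Q p := by
    intro p hp hp0
    obtain ⟨a, ha, b, hb, rfl⟩ := Submodule.mem_sup.1 hp
    obtain ⟨b', hb', rfl⟩ := hb
    have hA : a ∈ L := hRle ha
    have hB : b' ∈ L := hRle hb'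
    have hq : Q (a + cConj n b') = Q a + Q b' := by
      unfold Q
      rw [H_add_left, H_add_right, H_add_right, hH1 a hA b' hB, hH2 b' hB a hA, H_conj]
      simp [Complex.add_re, Complex.conj_re]
    rw [hq]
    rcases eq_or_ne a 0 with rfl | ha0
    · have hb0 : b' ≠ 0 := by
        intro h
        exact hp0 (by simp [h, cConj_zero])
      have h1 := hRpos b' hb' hb0
      have h2 : Q (0 : W n) = 0 := Q_zero
      linarith
    · have h1 := hRpos a ha ha0
      have h2 := Q_nonneg_of_pos hRpos b' hb'
      linarith
  have hNneg : ∀ p ∈ S ⊔ conjSub S, p ≠ 0 → Q p < 0 := by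
    intro p hp hp0
    obtain ⟨a, ha, b, hb, rfl⟩ := Submodule.mem_sup.1 hp
    obtain ⟨b', hb', rfl⟩ := hb
    have hA : a ∈ L := hSle ha
    have hB : b' ∈ L := hSle hb'
    have hq : Q (a + cConj n b') = Q a + Q b' := by
      unfold Q
      rw [H_add_left, H_add_right, H_add_right, hH1 a hA b' hB, hH2 b' hB a hA, H_conj]
      simp [Complex.add_re, Complex.conj_re]
    rw [hq]
    rcases eq_or_ne a 0 with rfl | ha0
    · have hb0 : b' ≠ 0 := by
        intro h
        exact hp0 (by simp [h, cConj_zero])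
      have h1 := hSneg b' hb' hb0
      have h2 : Q (0 : W n) = 0 := Q_zero
      linarith
    · have h1 := hSneg a ha ha0
      have h2 := Q_nonpos_of_neg hSneg b' hb'
      linarith
  -- ranks of the doubled spaces
  have hrankdouble : ∀ T : Submodule ℂ (W n), T ≤ L →
      Module.finrank ℂ ↥(T ⊔ conjSub T) = 2 * Module.finrank ℂ T := by
    intro T hT
    have hinfT : T ⊓ conjSub T = ⊥ := by
      rw [eq_bot_iff, ← hinf]
      exact inf_le_inf hT (conjSub_le hT)
    have h := Submodule.finrank_sup_add_finrank_inf_eq T (conjSub T)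
    rw [hinfT, finrank_bot, add_zero, finrank_conjSub] at h
    omega
  -- Q on diagonal subspaces
  have hDgneg : ∀ p ∈ Dg (n := n) (-1), Q p ≤ 0 := by
    intro p hp
    obtain ⟨x, rfl⟩ := mem_Dg.1 hp
    rw [neg_one_smul]
    rcases eq_or_ne x 0 with rfl | hx0
    · have : ((0, -0) : W n) = 0 := by simp
      rw [this, Q_zero]
    · exact (Q_antidiag_neg hx0).le
  have hDgpos : ∀ p ∈ Dg (n := n) 1, p ≠ 0 → 0 < Q p := by
    intro p hp hp0
    obtain ⟨x, rfl⟩ := mem_Dg.1 hp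
    rw [one_smul]
    rw [one_smul] at hp0
    have hx0 : x ≠ 0 := by
      intro h
      exact hp0 (by simp [h])
    exact Q_diag_pos hx0
  have hc1 := count hPpos hDgneg
  have hc2 := count hDgpos (Q_nonpos_of_neg hNneg)
  rw [hrankdouble R hRle, finrank_Dg] at hc1
  rw [hrankdouble S hSle, finrank_Dg] at hc2
  exact ⟨Module.finrank ℂ R, by omega⟩

end Final
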